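/- There exists a sequence (f_γ)_{γ<ω₂} of functions from ω₁ to ω₁ that is <*-increasing: for all γ < δ < ω₂, the set {α < ω₁ : f_γ(α) ≥ f_δ(α)} is countable. -/

import Mathlib

open Set Cardinal

universe u v w

namespace Omega2Seq

/-- The countable ordinals, as a subtype. -/
abbrev O1 : Type (v + 1) := {α : Ordinal.{v} // α < (Cardinal.aleph 1).ord}

lemma mk_O1 : #(O1.{v}) = Cardinal.lift.{v + 1, v} (Cardinal.aleph 1) := by
  have := Ordinal.mk_Iio_ordinal (Cardinal.aleph 1).ord
  rw [Cardinal.card_ord] at this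
  rw [← this]
  exact Cardinal.mk_congr (Equiv.subtypeEquivRight fun _ => Iff.rfl)

lemma card_le_aleph0 (ξ : O1.{v}) : ξ.1.card ≤ ℵ₀ :=
  Order.lt_succ_iff.mp (by rw [Cardinal.succ_aleph0]; exact Cardinal.lt_ord.mp ξ.2)

lemma countable_lt (ξ : O1.{v}) : {α : O1.{v} | α < ξ}.Countable := by
  rw [← Set.countable_coe_iff, ← Cardinal.mk_le_aleph0_iff]
  have h1 : #{α : O1.{v} | α < ξ} ≤ #(Set.Iio ξ.1) :=
    Cardinal.mk_le_of_injective (f := fun a => (⟨a.1.1, a.2⟩ : Set.Iio ξ.1))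
      (by rintro ⟨⟨a, ha⟩, ha'⟩ ⟨⟨b, hb⟩, hb'⟩ h; simpa using congrArg Subtype.val h)
  have h2 : #(Set.Iio ξ.1) = Cardinal.lift.{v + 1, v} ξ.1.card := Ordinal.mk_Iio_ordinal _
  calc #{α : O1.{v} | α < ξ} ≤ Cardinal.lift.{v + 1, v} ξ.1.card := h1.trans_eq h2
    _ ≤ Cardinal.lift.{v + 1, v} ℵ₀ := Cardinal.lift_le.mpr (card_le_aleph0 ξ)
    _ = ℵ₀ := Cardinal.lift_aleph0

lemma countable_le_subtype (α : O1.{v}) : Countable {ξ : O1.{v} // ξ ≤ α} := by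
  rw [← Cardinal.mk_le_aleph0_iff]
  have hlim : Order.IsSuccLimit ((Cardinal.aleph 1).ord : Ordinal.{v}) :=
    Cardinal.isSuccLimit_ord (Cardinal.aleph0_le_aleph 1)
  have h1 : #{ξ : O1.{v} // ξ ≤ α} ≤ #(Set.Iio (α.1 + 1)) :=
    Cardinal.mk_le_of_injective
      (f := fun a => (⟨a.1.1, lt_of_le_of_lt (show a.1.1 ≤ α.1 from a.2) (by rw [Ordinal.add_one_eq_succ]; exact Order.lt_succ _)⟩ : Set.Iio (α.1 + 1)))
      (by rintro ⟨⟨a, ha⟩, ha'⟩ ⟨⟨b, hb⟩, hb'⟩ h; simpa using congrArg Subtype.val h)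
  have h2 : #(Set.Iio (α.1 + 1)) = Cardinal.lift.{v + 1, v} (α.1 + 1).card :=
    Ordinal.mk_Iio_ordinal _
  have h3 : (α.1 + 1).card ≤ ℵ₀ := by
    rw [Ordinal.add_one_eq_succ, Ordinal.card_succ]
    calc α.1.card + 1 ≤ ℵ₀ + 1 := by gcongr; exact card_le_aleph0 α
      _ = ℵ₀ := by simp
  calc #{ξ : O1.{v} // ξ ≤ α} ≤ Cardinal.lift.{v + 1, v} (α.1 + 1).card := h1.trans_eq h2
    _ ≤ Cardinal.lift.{v + 1, v} ℵ₀ := Cardinal.lift_le.mpr h3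
    _ = ℵ₀ := Cardinal.lift_aleph0

/-- Any family of at most `ℵ₁` functions `ω₁ → ω₁` has a `<*`-upper bound. -/
lemma exists_dominating {ι : Type*} (g : ι → O1.{v} → O1.{w})
    (hι : Nonempty (ι ↪ O1.{v})) :
    ∃ f : O1.{v} → O1.{w}, ∀ i, {α | f α ≤ g i α}.Countable := by
  rcases isEmpty_or_nonempty ι with hE | hN
  · exact ⟨fun _ => ⟨0, (Cardinal.isSuccLimit_ord (Cardinal.aleph0_le_aleph 1)).pos⟩,
      fun i => (hE.false i).elim⟩
  obtain ⟨j⟩ := hι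
  set e : O1.{v} → ι := Function.invFun j with he
  have esurj : Function.Surjective e := Function.invFun_surjective j.injective
  have hlim : Order.IsSuccLimit ((Cardinal.aleph 1).ord : Ordinal.{w}) :=
    Cardinal.isSuccLimit_ord (Cardinal.aleph0_le_aleph 1)
  -- for each α, enumerate the ordinals ≤ α by a sequence
  have hq : ∀ α : O1.{v}, ∃ q : ℕ → {ξ : O1.{v} // ξ ≤ α}, Function.Surjective q := by
    intro α
    haveI := countable_le_subtype α
    haveI : Nonempty {ξ : O1.{v} // ξ ≤ α} := ⟨⟨α, le_rfl⟩⟩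
    exact exists_surjective_nat _
  choose q hqs using hq
  -- the diagonal supremum
  set s : O1.{v} → Ordinal.{w} :=
    fun α => ⨆ n : ℕ, ((g (e (q α n).1) α).1 + 1) with hsdef
  have hs : ∀ α : O1.{v}, s α < (Cardinal.aleph 1).ord := fun α =>
    by
      show (⨆ n : ℕ, ((g (e (q α n).1) α).1 + 1)) < (Cardinal.aleph 1).ord
      rw [Cardinal.ord_aleph] at hlim
      refine lt_of_lt_of_eq ?_ (Cardinal.ord_aleph 1).symm
      exact Ordinal.iSup_lt_omega_one fun n => by
        rw [Ordinal.add_one_eq_succ]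
        exact hlim.succ_lt (by rw [← Cardinal.ord_aleph]; exact (g (e (q α n).1) α).2)
  refine ⟨fun α => ⟨s α, hs α⟩, fun i => ?_⟩
  obtain ⟨ξ0, hξ0⟩ := esurj i
  apply (countable_lt ξ0).mono
  intro α hα
  by_contra hlt
  simp only [Set.mem_setOf_eq, not_lt] at hlt
  have hle : ξ0 ≤ α := hlt
  obtain ⟨n, hn⟩ := hqs α ⟨ξ0, hle⟩
  have hd : (g i α).1 + 1 ≤ s α := by
    have := le_ciSup (f := fun n : ℕ => ((g (e (q α n).1) α).1 + 1))
      (Ordinal.bddAbove_range _) n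
    rwa [hn, hξ0] at this
  have hub : s α ≤ (g i α).1 := hα
  have hlt1 : (g i α).1 < (g i α).1 + 1 := by
    rw [Ordinal.add_one_eq_succ]; exact Order.lt_succ _
  exact absurd (lt_of_lt_of_le hlt1 (hd.trans hub)) (lt_irrefl _)

/-- The predecessors of an ordinal below `ω₂` embed into `ω₁`. -/
lemma emb_nonempty (γ : {γ : Ordinal.{u} // γ < (Cardinal.aleph 2).ord}) :
    Nonempty ({β : {γ : Ordinal.{u} // γ < (Cardinal.aleph 2).ord} // β < γ} ↪ O1.{v}) := by
  rw [← Cardinal.lift_mk_le']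
  have h1 : #{β : {γ : Ordinal.{u} // γ < (Cardinal.aleph 2).ord} // β < γ} ≤
      #(Set.Iio γ.1) :=
    Cardinal.mk_le_of_injective (f := fun b => (⟨b.1.1, b.2⟩ : Set.Iio γ.1))
      (by rintro ⟨⟨a, ha⟩, ha'⟩ ⟨⟨b, hb⟩, hb'⟩ h
          simpa using congrArg Subtype.val h)
  have h2 : #(Set.Iio γ.1) = Cardinal.lift.{u + 1, u} γ.1.card := Ordinal.mk_Iio_ordinal _
  have h3 : γ.1.card ≤ Cardinal.aleph 1 := by
    have hγ := Cardinal.lt_ord.mp γ.2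
    have h2eq : (2 : Ordinal) = Order.succ 1 := by
      rw [← Ordinal.add_one_eq_succ, one_add_one_eq_two]
    have hsucc : (Cardinal.aleph 2) = Order.succ (Cardinal.aleph 1) := by
      rw [h2eq, Cardinal.aleph_succ]
    exact Order.lt_succ_iff.mp (lt_of_lt_of_eq hγ hsucc)
  have hL : #{β : {γ : Ordinal.{u} // γ < (Cardinal.aleph 2).ord} // β < γ} ≤
      Cardinal.lift.{u + 1, u} (Cardinal.aleph 1) :=
    (h1.trans_eq h2).trans (Cardinal.lift_le.mpr h3)
  calc Cardinal.lift.{v + 1} #{β : {γ : Ordinal.{u} // γ < (Cardinal.aleph 2).ord} // β < γ}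
      ≤ Cardinal.lift.{v + 1} (Cardinal.lift.{u + 1, u} (Cardinal.aleph 1)) :=
        Cardinal.lift_le.mpr hL
    _ = Cardinal.lift.{u + 1} (Cardinal.lift.{v + 1, v} (Cardinal.aleph 1)) := by
        rw [Cardinal.lift_lift, Cardinal.lift_lift, Cardinal.lift_aleph, Cardinal.lift_aleph]
        simp
    _ = Cardinal.lift.{u + 1} #(O1.{v}) := by rw [mk_O1]

end Omega2Seq

/-- There is a `<*`-increasing sequence of functions `ω₁ → ω₁` of length `ω₂`. -/
theorem exists_increasing_omega2_sequence :
    ∃ f : {γ : Ordinal // γ < (Cardinal.aleph 2).ord} →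
          ({α : Ordinal // α < (Cardinal.aleph 1).ord} →
           {α : Ordinal // α < (Cardinal.aleph 1).ord}),
      ∀ γ δ : {γ : Ordinal // γ < (Cardinal.aleph 2).ord}, γ < δ →
        {α | f δ α ≤ f γ α}.Countable := by
  classical
  have wf : WellFounded ((· < ·) : {γ : Ordinal // γ < (Cardinal.aleph 2).ord} →
      {γ : Ordinal // γ < (Cardinal.aleph 2).ord} → Prop) := IsWellFounded.wf
  set D : ∀ γ : {γ : Ordinal // γ < (Cardinal.aleph 2).ord},
      (∀ β, β < γ → ({α : Ordinal // α < (Cardinal.aleph 1).ord} →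
        {α : Ordinal // α < (Cardinal.aleph 1).ord})) →
      ({α : Ordinal // α < (Cardinal.aleph 1).ord} →
        {α : Ordinal // α < (Cardinal.aleph 1).ord}) :=
    fun γ ih => Classical.choose (Omega2Seq.exists_dominating
      (fun b : {β // β < γ} => ih b.1 b.2) (Omega2Seq.emb_nonempty γ)) with hD
  set F := wf.fix D with hF
  refine ⟨F, fun γ δ hγδ => ?_⟩
  have hfix : F δ = D δ (fun β _ => F β) := wf.fix_eq D δ
  have hspec := Classical.choose_spec (Omega2Seq.exists_dominating
      (fun b : {β // β < δ} => F b.1) (Omega2Seq.emb_nonempty δ))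
  have hFδ : F δ = Classical.choose (Omega2Seq.exists_dominating
      (fun b : {β // β < δ} => F b.1) (Omega2Seq.emb_nonempty δ)) := hfix
  have := hspec ⟨γ, hγδ⟩
  rw [← hFδ] at this
  exact this
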